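/- Let Ω be a bounded Lipschitz domain, u harmonic with trace g, and v harmonic. Combining the guaranteed bounds, for every divergence-free τ ∈ H(div,Ω) and every w ∈ H¹(Ω) with w|_Γ = g − v|_Γ, one has 2⟨g − v|_Γ, τ·n|_Γ⟩_Γ − ‖τ‖²_{L²(Ω)} ≤ ‖∇(u−v)‖²_{L²(Ω)} ≤ ‖∇w‖²_{L²(Ω)}, so these computable quantities form a guaranteed two-sided interval for the potential error. -/
import Mathlib


open scoped RealInnerProductSpace

/-- Abstract Sobolev setting: `V = H¹(Ω)`, `L2v = L²(Ω;ℝ^d)`, `L2 = L²(Ω)`,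
`Ht = H^{1/2}(Γ)`, `Hm = H^{−1/2}(Γ)`, `Hd = H(div,Ω)`, with `grad`, `emb`, `tr`,
`toL2v`, `dvg`, `ntr`, `pair` as usual and the integration-by-parts formula `hIBP`.

Statement (guaranteed two-sided bounds): for `u, v` weakly harmonic with `u|_Γ = g`,
every divergence-free `τ ∈ H(div,Ω)` and every `w ∈ H¹(Ω)` with `w|_Γ = g − v|_Γ` satisfy
`2⟨g − v|_Γ, τ·n⟩_Γ − ‖τ‖²_{L²(Ω)} ≤ ‖∇(u−v)‖²_{L²(Ω)} ≤ ‖∇w‖²_{L²(Ω)}`. -/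
theorem stmt16
    {V L2v L2 Ht Hm Hd : Type*}
    [AddCommGroup V] [Module ℝ V]
    [NormedAddCommGroup L2v] [InnerProductSpace ℝ L2v]
    [NormedAddCommGroup L2] [InnerProductSpace ℝ L2]
    [AddCommGroup Ht] [Module ℝ Ht] [AddCommGroup Hm] [Module ℝ Hm]
    [AddCommGroup Hd] [Module ℝ Hd]
    (grad : V →ₗ[ℝ] L2v) (emb : V →ₗ[ℝ] L2) (tr : V →ₗ[ℝ] Ht)
    (toL2v : Hd →ₗ[ℝ] L2v) (dvg : Hd →ₗ[ℝ] L2) (ntr : Hd →ₗ[ℝ] Hm)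
    (pair : Ht →ₗ[ℝ] Hm →ₗ[ℝ] ℝ)
    (hIBP : ∀ (w : V) (σ : Hd),
      ⟪grad w, toL2v σ⟫ = pair (tr w) (ntr σ) - ⟪emb w, dvg σ⟫)
    (u v : V) (g : Ht) (hg : tr u = g)
    (hu : ∀ φ : V, tr φ = 0 → ⟪grad u, grad φ⟫ = 0)
    (hv : ∀ φ : V, tr φ = 0 → ⟪grad v, grad φ⟫ = 0)
    (τ : Hd) (hτ : dvg τ = 0)
    (w : V) (hw : tr w = g - tr v) :
    2 * pair (g - tr v) (ntr τ) - ‖toL2v τ‖ ^ 2 ≤ ‖grad (u - v)‖ ^ 2 ∧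
    ‖grad (u - v)‖ ^ 2 ≤ ‖grad w‖ ^ 2 := by
  have he : ∀ φ : V, tr φ = 0 → ⟪grad (u - v), grad φ⟫ = 0 := by
    intro φ hφ
    rw [map_sub, inner_sub_left, hu φ hφ, hv φ hφ, sub_zero]
  constructor
  · have hibp : ⟪grad (u - v), toL2v τ⟫ = pair (g - tr v) (ntr τ) := by
      rw [hIBP (u - v) τ, hτ, inner_zero_right, sub_zero, map_sub, hg]
    have h0 : (0:ℝ) ≤ ‖grad (u - v) - toL2v τ‖ ^ 2 := by positivity
    rw [norm_sub_sq_real, hibp] at h0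
    linarith
  · have hzero : tr (w - (u - v)) = 0 := by
      rw [map_sub, map_sub, hw, hg]; abel
    have h := he _ hzero
    have hdecomp : grad w = grad (u - v) + grad (w - (u - v)) := by
      rw [← map_add]; congr 1; abel
    rw [hdecomp, norm_add_sq_real, h]
    nlinarith [sq_nonneg ‖grad (w - (u - v))‖]
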